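/- Let (X, π) be a finite symmetric two-player game with relative payoff game (X, Δ). If the zero-sum game (X, Δ) has no pure saddle point, then imitation is subject to a money pump. -/
import Mathlib


/-- The imitator's action sequence: `y₀` initially; imitate the opponent's previous
action iff it earned a strictly positive relative payoff. -/
noncomputable def imitSeq {X : Type*} (Δ : X → X → ℝ) (x : ℕ → X) (y0 : X) : ℕ → X
  | 0 => y0
  | t + 1 => if 0 < Δ (x t) (imitSeq Δ x y0 t) then x t else imitSeq Δ x y0 t

/-- Imitation is subject to a money pump. -/
def MoneyPump {X : Type*} (Δ : X → X → ℝ) : Prop :=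
  ∀ M : ℝ, ∃ (y0 : X) (x : ℕ → X) (T : ℕ),
    M < ∑ t ∈ Finset.range (T + 1), Δ (x t) (imitSeq Δ x y0 t)

theorem stmt3 {X : Type*} [Fintype X] [Nonempty X] (π : X → X → ℝ)
    (Δ : X → X → ℝ) (hΔ : ∀ x y, Δ x y = π x y - π y x)
    (hnosaddle : ¬ ∃ xs ys : X, ∀ x y : X, Δ x ys ≤ Δ xs ys ∧ Δ xs ys ≤ Δ xs y) :
    MoneyPump Δ := by
  have hskew : ∀ a b, Δ a b = -Δ b a := by
    intro a b; rw [hΔ, hΔ]; ring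
  have hdiag : ∀ a, Δ a a = 0 := by intro a; rw [hΔ]; ring
  -- every action is beaten by some action
  have hbeat : ∀ a : X, ∃ b : X, 0 < Δ b a := by
    intro a
    by_contra h
    push_neg at h
    exact hnosaddle ⟨a, a, fun x y => ⟨by rw [hdiag]; exact h x,
      by rw [hdiag, hskew]; linarith [h y]⟩⟩
  choose f hf using hbeat
  classical
  set ε : ℝ := Finset.univ.inf' Finset.univ_nonempty (fun a => Δ (f a) a) with hε
  have hεpos : 0 < ε := by
    obtain ⟨a, -, ha⟩ := Finset.exists_mem_eq_inf' Finset.univ_nonempty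
      (fun a => Δ (f a) a)
    rw [hε, ha]; exact hf a
  have hεle : ∀ a : X, ε ≤ Δ (f a) a := fun a =>
    Finset.inf'_le _ (Finset.mem_univ a)
  intro M
  obtain ⟨y0⟩ := ‹Nonempty X›
  refine ⟨y0, fun t => f (f^[t] y0), ?_, ?_⟩
  · -- need T later; first prove imitSeq equals iterate
    exact Classical.choose (exists_nat_gt (M / ε))
  set x : ℕ → X := fun t => f (f^[t] y0) with hx
  have hsim : ∀ t, imitSeq Δ x y0 t = f^[t] y0 := by
    intro t
    induction t with
    | zero => rfl
    | succ t ih =>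
      simp only [imitSeq, ih]
      rw [if_pos]
      · simp [hx, Function.iterate_succ_apply']
      · exact hf _
  set T := Classical.choose (exists_nat_gt (M / ε)) with hT
  have hTgt : M / ε < (T : ℝ) := Classical.choose_spec (exists_nat_gt (M / ε))
  have hsum : (T + 1 : ℝ) * ε ≤ ∑ t ∈ Finset.range (T + 1), Δ (x t) (imitSeq Δ x y0 t) := by
    calc (T + 1 : ℝ) * ε = ∑ _t ∈ Finset.range (T + 1), ε := by
          rw [Finset.sum_const, Finset.card_range, nsmul_eq_mul]; push_cast; ring
      _ ≤ _ := Finset.sum_le_sum fun t _ => by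
          rw [hsim t]; exact hεle _
  have : M < (T + 1 : ℝ) * ε := by
    have h1 : M < T * ε := by
      rw [div_lt_iff₀ hεpos] at hTgt; linarith
    nlinarith
  linarith
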